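/- Define f(v) = 3 − 2·log₂( max over c_z ∈ [−1, 1 − v/√2] of ( 2√(1 + c_z) + √(1 − c_z + v/√2) + √(1 − c_z − v/√2) ) ) for v ∈ (2, 2√2]. Then f is monotonically increasing in v. -/
import Mathlib


/-- The function `f(v)` from the CHSH–min-entropy tradeoff. -/
noncomputable def fCHSH (v : ℝ) : ℝ :=
  3 - 2 * Real.logb 2 (sSup ((fun cz : ℝ =>
    2 * Real.sqrt (1 + cz) + Real.sqrt (1 - cz + v / Real.sqrt 2) +
      Real.sqrt (1 - cz - v / Real.sqrt 2)) ''
    Set.Icc (-1) (1 - v / Real.sqrt 2)))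

private lemma sqrt_four : Real.sqrt 4 = 2 := by
  rw [show (4:ℝ) = 2^2 by norm_num, Real.sqrt_sq]; norm_num

private lemma key_sum (a t₁ t₂ : ℝ) (h0 : 0 ≤ t₁) (h12 : t₁ ≤ t₂) (ha : t₂ ≤ a) :
    Real.sqrt (a + t₂) + Real.sqrt (a - t₂) ≤ Real.sqrt (a + t₁) + Real.sqrt (a - t₁) := by
  set p := Real.sqrt (a + t₁)
  set q := Real.sqrt (a - t₁)
  set r := Real.sqrt (a + t₂)
  set s := Real.sqrt (a - t₂)
  have hp : p ^ 2 = a + t₁ := Real.sq_sqrt (by linarith)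
  have hq : q ^ 2 = a - t₁ := Real.sq_sqrt (by linarith)
  have hr : r ^ 2 = a + t₂ := Real.sq_sqrt (by linarith)
  have hs : s ^ 2 = a - t₂ := Real.sq_sqrt (by linarith)
  have hpq : r * s ≤ p * q := by
    rw [show r * s = Real.sqrt ((a + t₂) * (a - t₂)) from
      (Real.sqrt_mul (by linarith) _).symm,
      show p * q = Real.sqrt ((a + t₁) * (a - t₁)) from
      (Real.sqrt_mul (by linarith) _).symm]
    apply Real.sqrt_le_sqrt; nlinarith
  have hsq : (r + s) ^ 2 ≤ (p + q) ^ 2 := by nlinarith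
  have hpn : 0 ≤ p + q := by positivity
  have hrn : 0 ≤ r + s := by positivity
  nlinarith [hsq, hpn, hrn]

theorem stmt_9 (v₁ v₂ : ℝ) (h1 : 2 < v₁) (h12 : v₁ ≤ v₂)
    (h2 : v₂ ≤ 2 * Real.sqrt 2) : fCHSH v₁ ≤ fCHSH v₂ := by
  have hs2 : Real.sqrt 2 > 0 := by positivity
  have hs2sq : Real.sqrt 2 ^ 2 = 2 := Real.sq_sqrt (by norm_num)
  set t₁ := v₁ / Real.sqrt 2 with ht₁
  set t₂ := v₂ / Real.sqrt 2 with ht₂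
  have ht₁pos : 0 < t₁ := by positivity
  have ht12 : t₁ ≤ t₂ := by exact div_le_div_of_nonneg_right h12 hs2.le
  have ht₂le : t₂ ≤ 2 := by
    rw [ht₂, div_le_iff₀ hs2]
    nlinarith
  set g₁ := fun cz : ℝ => 2 * Real.sqrt (1 + cz) + Real.sqrt (1 - cz + t₁) +
      Real.sqrt (1 - cz - t₁) with hg₁
  set g₂ := fun cz : ℝ => 2 * Real.sqrt (1 + cz) + Real.sqrt (1 - cz + t₂) +
      Real.sqrt (1 - cz - t₂) with hg₂
  set S₁ := g₁ '' Set.Icc (-1 : ℝ) (1 - t₁) with hS₁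
  set S₂ := g₂ '' Set.Icc (-1 : ℝ) (1 - t₂) with hS₂
  have hbdd : ∀ (t : ℝ), 0 ≤ t → t ≤ 2 → BddAbove ((fun cz : ℝ =>
      2 * Real.sqrt (1 + cz) + Real.sqrt (1 - cz + t) + Real.sqrt (1 - cz - t)) ''
      Set.Icc (-1 : ℝ) (1 - t)) := by
    intro t ht0 ht2
    refine ⟨8, ?_⟩
    rintro x ⟨cz, ⟨hcl, hcr⟩, rfl⟩
    have e1 : Real.sqrt (1 + cz) ≤ 2 := by
      calc Real.sqrt (1 + cz) ≤ Real.sqrt 4 := Real.sqrt_le_sqrt (by linarith)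
      _ = 2 := sqrt_four
    have e2 : Real.sqrt (1 - cz + t) ≤ 2 := by
      calc Real.sqrt (1 - cz + t) ≤ Real.sqrt 4 := Real.sqrt_le_sqrt (by linarith)
      _ = 2 := sqrt_four
    have e3 : Real.sqrt (1 - cz - t) ≤ 2 := by
      calc Real.sqrt (1 - cz - t) ≤ Real.sqrt 4 := Real.sqrt_le_sqrt (by linarith)
      _ = 2 := sqrt_four
    simp only
    linarith
  have hbdd₁ : BddAbove S₁ := hbdd t₁ ht₁pos.le (le_trans ht12 ht₂le)
  have hbdd₂ : BddAbove S₂ := hbdd t₂ (le_trans ht₁pos.le ht12) ht₂le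
  have hmem₂ : g₂ (-1) ∈ S₂ := ⟨-1, ⟨le_refl _, by linarith⟩, rfl⟩
  have hpos₂ : 0 < g₂ (-1) := by
    have : 0 < Real.sqrt (1 - (-1) + t₂) := Real.sqrt_pos.mpr (by linarith)
    have h2' : 0 ≤ Real.sqrt (1 + (-1 : ℝ)) := Real.sqrt_nonneg _
    have h3' : 0 ≤ Real.sqrt (1 - (-1 : ℝ) - t₂) := Real.sqrt_nonneg _
    simp only [hg₂]
    linarith
  have hsup₂pos : 0 < sSup S₂ := lt_of_lt_of_le hpos₂ (le_csSup hbdd₂ hmem₂)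
  have hle : sSup S₂ ≤ sSup S₁ := by
    apply csSup_le ⟨g₂ (-1), hmem₂⟩
    rintro x ⟨cz, ⟨hcl, hcr⟩, rfl⟩
    have hk : g₂ cz ≤ g₁ cz := by
      simp only [hg₁, hg₂]
      have := key_sum (1 - cz) t₁ t₂ ht₁pos.le ht12 (by linarith)
      linarith
    have : g₁ cz ∈ S₁ := ⟨cz, ⟨hcl, by linarith⟩, rfl⟩
    exact le_trans hk (le_csSup hbdd₁ this)
  have hlog : Real.logb 2 (sSup S₂) ≤ Real.logb 2 (sSup S₁) :=
    Real.logb_le_logb_of_le (by norm_num) hsup₂pos hle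
  unfold fCHSH
  rw [← ht₁, ← ht₂, ← hg₁, ← hg₂, ← hS₁, ← hS₂]
  linarith
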